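/- Let f : {-1,1}^n → ℝ≥0, η > 0, and suppose deg(f) ≤ D < deg₊(f + η), where deg(f) is the Fourier degree of f. Then there exists a function L : {-1,1}^n → ℝ of degree at most D such that: (1) E[L] = 1; (2) E[L·f] < −η; (3) E[L·h] ≥ 0 for every conical D-junta h on {-1,1}^n; (4) |L̂(S)| ≤ 1 for every S ⊆ [n] with |S| ≤ D; (5) ‖L‖∞ ≤ n^D. -/

import Mathlib

open scoped BigOperators

noncomputable section

/-- Sign of a Boolean bit, encoding `b ↦ (-1)^b ∈ {-1,1}`. -/
def sgn (x : Bool) : ℝ := if x then -1 else 1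

/-- Expectation under the uniform distribution on a finite type. -/
def uexp {Ω : Type*} [Fintype Ω] (f : Ω → ℝ) : ℝ :=
  (∑ x, f x) / (Fintype.card Ω : ℝ)

/-- The parity character `χ_S(x) = ∏_{i ∈ S} x_i` on the cube `{-1,1}^n`. -/
def chi {n : ℕ} (S : Finset (Fin n)) (x : Fin n → Bool) : ℝ :=
  ∏ i ∈ S, sgn (x i)

/-- Fourier coefficient `f̂(S) = E[f · χ_S]`. -/
def fCoeff {n : ℕ} (f : (Fin n → Bool) → ℝ) (S : Finset (Fin n)) : ℝ :=
  uexp (fun x => f x * chi S x)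

open Classical in
/-- Fourier degree: the largest `|S|` with `f̂(S) ≠ 0`. -/
def fdeg {n : ℕ} (f : (Fin n → Bool) → ℝ) : ℕ :=
  (Finset.univ.filter (fun S : Finset (Fin n) => fCoeff f S ≠ 0)).sup Finset.card

/-- A `d`-junta: a function depending on at most `d` coordinates. -/
def IsJunta {n : ℕ} (d : ℕ) (h : (Fin n → Bool) → ℝ) : Prop :=
  ∃ T : Finset (Fin n), T.card ≤ d ∧ ∀ x y, (∀ i ∈ T, x i = y i) → h x = h y

/-- A conical `d`-junta: a nonnegative combination of nonnegative `d`-juntas. -/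
def IsConicalJunta {n : ℕ} (d : ℕ) (f : (Fin n → Bool) → ℝ) : Prop :=
  ∃ (N : ℕ) (c : Fin N → ℝ) (g : Fin N → (Fin n → Bool) → ℝ),
    (∀ i, 0 ≤ c i) ∧ (∀ i x, 0 ≤ g i x) ∧ (∀ i, IsJunta d (g i)) ∧
    ∀ x, f x = ∑ i, c i * g i x

/-- Nonnegative degree `deg₊(f)`: least `d` such that `f` is a conical `d`-junta. -/
def degPlus {n : ℕ} (f : (Fin n → Bool) → ℝ) : ℕ :=
  sInf {d | IsConicalJunta d f}

/-- The (modified inner-product) gadget `g : {0,1}^b × {0,1}^b → {-1,1}`,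
with output encoded as a Boolean exponent: `g(x,y) = x₁ ⊕ y₁ ⊕ (⊕ᵢ xᵢyᵢ)`. -/
def gadget {b : ℕ} (x y : Fin b → Bool) : Bool :=
  decide (((∑ i : Fin b,
        (if x i then (1 : ZMod 2) else 0) * (if y i then (1 : ZMod 2) else 0))
    + (if h : 0 < b then
        (if x ⟨0, h⟩ then (1 : ZMod 2) else 0) + (if y ⟨0, h⟩ then (1 : ZMod 2) else 0)
      else 0)) = 1)

/-- `G = g^{⊗n}`, the gadget applied coordinatewise. -/
def gadgetN {n b : ℕ} (x y : Fin n → Fin b → Bool) : Fin n → Bool :=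
  fun i => gadget (x i) (y i)

/-- The pattern matrix `M_f^b(x,y) = f(g^{⊗n}(x,y))`. -/
def patternMatrix {n : ℕ} (b : ℕ) (f : (Fin n → Bool) → ℝ) :
    (Fin n → Fin b → Bool) → (Fin n → Fin b → Bool) → ℝ :=
  fun x y => f (gadgetN x y)

/-- Nonnegative rank: least `r` such that `M` is a sum of `r` nonnegative rank-1 matrices. -/
def nnRank {α β : Type*} [Fintype α] [Fintype β] (M : α → β → ℝ) : ℕ :=
  sInf {r | ∃ (u : Fin r → α → ℝ) (v : Fin r → β → ℝ),
    (∀ i a, 0 ≤ u i a) ∧ (∀ i b, 0 ≤ v i b) ∧ ∀ a b, M a b = ∑ i, u i a * v i b}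

/-- Entrywise sup-norm of a matrix. -/
def supAbs {α β : Type*} [Fintype α] [Fintype β] (M : α → β → ℝ) : ℝ :=
  ⨆ p : α × β, |M p.1 p.2|

/-- `ε`-approximate nonnegative rank. -/
def approxNNRank {α β : Type*} [Fintype α] [Fintype β] (ε : ℝ) (M : α → β → ℝ) : ℕ :=
  sInf {r | ∃ M' : α → β → ℝ, (∀ a b, 0 ≤ M' a b) ∧
    (∀ a b, |M' a b - M a b| ≤ ε * supAbs M) ∧ nnRank M' ≤ r}

/-- A density: nonnegative with expectation 1 under the uniform distribution. -/
def IsDensity {Ω : Type*} [Fintype Ω] (u : Ω → ℝ) : Prop :=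
  (∀ x, 0 ≤ u x) ∧ uexp u = 1

/-- `Pr_{X ~ μ}[X ∈ S]` for a density `μ`. -/
def prSet {Ω : Type*} [Fintype Ω] (μ : Ω → ℝ) (S : Finset Ω) : ℝ :=
  (∑ x ∈ S, μ x) / (Fintype.card Ω : ℝ)

/-- Min-entropy `H∞(u) = min_x log₂(|Ω| / u(x)) = -log₂ max_x Pr[X = x]`. -/
def minEntropy {Ω : Type*} [Fintype Ω] (u : Ω → ℝ) : ℝ :=
  - Real.logb 2 (⨆ x, u x / (Fintype.card Ω : ℝ))

open Classical in
/-- `Pr_{X ~ u}[X_I = y_I]`, the probability that the projection to `I` agrees with `y`. -/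
def prMarg {n : ℕ} {α : Type*} [Fintype α] (u : (Fin n → α) → ℝ) (I : Finset (Fin n))
    (y : Fin n → α) : ℝ :=
  (∑ x ∈ Finset.univ.filter (fun x : Fin n → α => ∀ i ∈ I, x i = y i), u x)
    / (Fintype.card (Fin n → α) : ℝ)

/-- Min-entropy of the projection `X_I` for `X ~ u`. -/
def projMinEntropy {n : ℕ} {α : Type*} [Fintype α] (u : (Fin n → α) → ℝ)
    (I : Finset (Fin n)) : ℝ :=
  - Real.logb 2 (⨆ y : Fin n → α, prMarg u I y)

/-- Blockwise-dense: every projection has min-entropy at least `0.8 |I| log₂ q`. -/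
def IsBlockwiseDense {n : ℕ} {α : Type*} [Fintype α] (u : (Fin n → α) → ℝ) : Prop :=
  ∀ I : Finset (Fin n),
    0.8 * (I.card : ℝ) * Real.logb 2 (Fintype.card α) ≤ projMinEntropy u I

/-- `d`-CBD with fixed set `I`: `X_I` is fixed and every disjoint projection is dense. -/
def IsCBDWith {n : ℕ} {α : Type*} [Fintype α] (d : ℝ) (I : Finset (Fin n))
    (u : (Fin n → α) → ℝ) : Prop :=
  (I.card : ℝ) ≤ d ∧ projMinEntropy u I = 0 ∧
  ∀ J : Finset (Fin n), Disjoint J I →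
    0.8 * (J.card : ℝ) * Real.logb 2 (Fintype.card α) ≤ projMinEntropy u J

/-- `d`-CBD distribution. -/
def IsCBD {n : ℕ} {α : Type*} [Fintype α] (d : ℝ) (u : (Fin n → α) → ℝ) : Prop :=
  ∃ I, IsCBDWith d I u

open Classical in
/-- `Acc_{u,v}`: the density on `{-1,1}^n` of `g^{⊗n}(X,Y)` for independent `X ~ u`, `Y ~ v`. -/
def AccFn {n b : ℕ} (u v : (Fin n → Fin b → Bool) → ℝ) (z : Fin n → Bool) : ℝ :=
  (2 : ℝ) ^ n * (∑ x : Fin n → Fin b → Bool, ∑ y : Fin n → Fin b → Bool,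
      if gadgetN x y = z then u x * v y else 0)
    / (Fintype.card (Fin n → Fin b → Bool) : ℝ) ^ 2

/-- `ε`-decaying function: mean zero with `|ĥ(S)| ≤ ε^{|S|}`. -/
def IsDecaying {n : ℕ} (ε : ℝ) (h : (Fin n → Bool) → ℝ) : Prop :=
  uexp h = 0 ∧ ∀ S : Finset (Fin n), |fCoeff h S| ≤ ε ^ S.card

/-- A `d`-conjunction, normalized to have expectation 1. -/
def IsConjunction {n : ℕ} (d : ℕ) (C : (Fin n → Bool) → ℝ) : Prop :=
  ∃ (I : Finset (Fin n)) (a : Fin n → Bool), I.card ≤ d ∧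
    ∀ x, C x = 2 ^ I.card * (if ∀ i ∈ I, x i = a i then (1 : ℝ) else 0)

/-- `(ε,δ)`-approximate conical `d`-junta. -/
def IsApproxConicalJunta {n : ℕ} (ε δ : ℝ) (d : ℕ) (f : (Fin n → Bool) → ℝ) : Prop :=
  ∃ (N : ℕ) (lam : Fin N → ℝ) (C h : Fin N → (Fin n → Bool) → ℝ)
    (γ : (Fin n → Bool) → ℝ),
    (∀ i, 0 ≤ lam i) ∧ (∑ i, lam i) ≤ 1 ∧
    (∀ i, IsConjunction d (C i)) ∧ (∀ i, IsDecaying ε (h i)) ∧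
    (∀ x, 0 ≤ γ x) ∧ uexp γ ≤ δ ∧
    ∀ x, f x = (∑ i, lam i * C i x * (1 + h i x)) + γ x

open Classical in
/-- The density `μ` conditioned on the event `S`. -/
def condDensity {Ω : Type*} [Fintype Ω] (μ : Ω → ℝ) (S : Finset Ω) : Ω → ℝ :=
  fun x => if x ∈ S then μ x / prSet μ S else 0

/-- First marginal density of a density on a product. -/
def margFst {Ω : Type*} [Fintype Ω] (μ : Ω × Ω → ℝ) : Ω → ℝ :=
  fun x => (∑ y, μ (x, y)) / (Fintype.card Ω : ℝ)

/-- Second marginal density of a density on a product. -/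
def margSnd {Ω : Type*} [Fintype Ω] (μ : Ω × Ω → ℝ) : Ω → ℝ :=
  fun y => (∑ x, μ (x, y)) / (Fintype.card Ω : ℝ)

open Classical in
/-- `Pr_{(X,Y) ~ μ}[X_I = y.1_I ∧ Y_I = y.2_I]`. -/
def prMarg2 {n : ℕ} {α : Type*} [Fintype α]
    (μ : (Fin n → α) × (Fin n → α) → ℝ) (I : Finset (Fin n))
    (y : (Fin n → α) × (Fin n → α)) : ℝ :=
  (∑ x ∈ Finset.univ.filter
      (fun x : (Fin n → α) × (Fin n → α) =>
        (∀ i ∈ I, x.1 i = y.1 i) ∧ (∀ i ∈ I, x.2 i = y.2 i)), μ x)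
    / (Fintype.card ((Fin n → α) × (Fin n → α)) : ℝ)

/-- Min-entropy of the projection `μ_I` of a density on a product, projecting both factors. -/
def projMinEntropy2 {n : ℕ} {α : Type*} [Fintype α]
    (μ : (Fin n → α) × (Fin n → α) → ℝ) (I : Finset (Fin n)) : ℝ :=
  - Real.logb 2 (⨆ y : (Fin n → α) × (Fin n → α), prMarg2 μ I y)


namespace Aux
open Finset
lemma sgn_sq (b : Bool) : sgn b * sgn b = 1 := by cases b <;> simp [sgn]
lemma sgn_ne {a b : Bool} (h : a ≠ b) : sgn a * sgn b = -1 := by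
  cases a <;> cases b <;> simp_all [sgn]
lemma abs_sgn (b : Bool) : |sgn b| = 1 := by cases b <;> simp [sgn]
lemma abs_chi {n : ℕ} (S : Finset (Fin n)) (x : Fin n → Bool) : |chi S x| = 1 := by
  rw [chi, Finset.abs_prod]
  exact Finset.prod_eq_one fun i _ => abs_sgn (x i)

lemma card_cube (n : ℕ) : (Fintype.card (Fin n → Bool) : ℝ) = 2 ^ n := by
  simp [Fintype.card_fun]

lemma card_cube_pos (n : ℕ) : (0:ℝ) < (Fintype.card (Fin n → Bool) : ℝ) := by
  rw [card_cube]; positivity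

/-- sum over the cube of a product over coordinates -/
lemma sum_cube_prod {n : ℕ} (F : Fin n → Bool → ℝ) :
    ∑ x : Fin n → Bool, ∏ i, F i (x i) = ∏ i, (F i false + F i true) := by
  rw [← Fintype.prod_sum]
  congr 1; ext i
  rw [Fintype.sum_bool]; ring

/-- key orthogonality sum -/
lemma sum_chi_mul {n : ℕ} (S T : Finset (Fin n)) :
    ∑ x : Fin n → Bool, chi S x * chi T x = if S = T then (2:ℝ) ^ n else 0 := by
  have : ∀ x : Fin n → Bool, chi S x * chi T x =
      ∏ i, ((if i ∈ S then sgn (x i) else 1) * (if i ∈ T then sgn (x i) else 1)) := by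
    intro x
    rw [Finset.prod_mul_distrib, chi, chi, Finset.prod_ite_mem, Finset.prod_ite_mem]
    simp
  rw [Finset.sum_congr rfl (fun x _ => this x),
    sum_cube_prod (fun i b => (if i ∈ S then sgn b else 1) * (if i ∈ T then sgn b else 1))]
  by_cases h : S = T
  · subst h
    simp only [if_pos rfl]
    rw [Finset.prod_congr rfl (g := fun _ => (2:ℝ)), Finset.prod_const]
    · simp
    · intro i _
      by_cases hi : i ∈ S <;> simp [hi, sgn] <;> norm_num
  · rw [if_neg h]
    obtain ⟨i, hi⟩ : ∃ i, (i ∈ S ∧ i ∉ T) ∨ (i ∈ T ∧ i ∉ S) := by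
      by_contra hc
      push_neg at hc
      apply h
      ext i
      constructor
      · intro hs; by_contra ht; exact ht ((hc i).1 hs)
      · intro ht; by_contra hs; exact hs ((hc i).2 ht)
    apply Finset.prod_eq_zero (Finset.mem_univ i)
    rcases hi with ⟨h1, h2⟩ | ⟨h1, h2⟩ <;> simp [h1, h2, sgn]


lemma uexp_sum {Ω : Type*} [Fintype Ω] {ι : Type*} (A : Finset ι) (F : ι → Ω → ℝ) :
    uexp (fun x => ∑ i ∈ A, F i x) = ∑ i ∈ A, uexp (F i) := by
  simp only [uexp, ← Finset.sum_div]
  rw [Finset.sum_comm]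

lemma uexp_smul {Ω : Type*} [Fintype Ω] (c : ℝ) (f : Ω → ℝ) :
    uexp (fun x => c * f x) = c * uexp f := by
  simp only [uexp, ← Finset.mul_sum, mul_div_assoc]

lemma uexp_add {Ω : Type*} [Fintype Ω] (f g : Ω → ℝ) :
    uexp (fun x => f x + g x) = uexp f + uexp g := by
  simp only [uexp, Finset.sum_add_distrib, add_div]

lemma uexp_const (n : ℕ) (c : ℝ) : uexp (fun _ : Fin n → Bool => c) = c := by
  simp only [uexp, Finset.sum_const, card_univ, nsmul_eq_mul]
  field_simp

lemma uexp_nonneg {Ω : Type*} [Fintype Ω] {f : Ω → ℝ} (hf : ∀ x, 0 ≤ f x) : 0 ≤ uexp f := by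
  apply div_nonneg (Finset.sum_nonneg fun x _ => hf x) (Nat.cast_nonneg _)

/-- orthonormality -/
lemma uexp_chi_chi {n : ℕ} (S T : Finset (Fin n)) :
    uexp (fun x => chi S x * chi T x) = if S = T then 1 else 0 := by
  rw [uexp, sum_chi_mul, card_cube]
  split <;> simp [ne_of_gt (pow_pos (by norm_num : (0:ℝ) < 2) n)]

lemma uexp_chi {n : ℕ} (S : Finset (Fin n)) :
    uexp (chi S) = if S = ∅ then 1 else 0 := by
  have := uexp_chi_chi S (∅ : Finset (Fin n))
  simp only [chi, Finset.prod_empty, mul_one] at this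
  exact this

/-- coefficients of an explicit chi-combination -/
lemma fCoeff_sum_chi {n : ℕ} (A : Finset (Finset (Fin n))) (d : Finset (Fin n) → ℝ)
    (T : Finset (Fin n)) :
    fCoeff (fun x => ∑ S ∈ A, d S * chi S x) T = if T ∈ A then d T else 0 := by
  rw [fCoeff]
  have : (fun x => (∑ S ∈ A, d S * chi S x) * chi T x)
      = fun x => ∑ S ∈ A, d S * (chi S x * chi T x) := by
    ext x; rw [Finset.sum_mul]; congr 1; ext S; ring
  rw [this, uexp_sum]
  have : ∀ S ∈ A, uexp (fun x => d S * (chi S x * chi T x)) = if S = T then d S else 0 := by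
    intro S _
    rw [uexp_smul, uexp_chi_chi]
    split <;> simp
  rw [Finset.sum_congr rfl this, Finset.sum_ite_eq' A T (fun S => d S)]

/-- Fourier inversion -/
lemma inversion {n : ℕ} (f : (Fin n → Bool) → ℝ) (x : Fin n → Bool) :
    f x = ∑ S : Finset (Fin n), fCoeff f S * chi S x := by
  have key : ∀ z : Fin n → Bool, ∑ S : Finset (Fin n), chi S z * chi S x
      = if z = x then (2:ℝ)^n else 0 := by
    intro z
    have : ∀ S : Finset (Fin n), chi S z * chi S x = ∏ i ∈ S, (sgn (z i) * sgn (x i)) := by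
      intro S; rw [chi, chi, Finset.prod_mul_distrib]
    calc ∑ S : Finset (Fin n), chi S z * chi S x
        = ∑ S : Finset (Fin n), (∏ i ∈ S, (sgn (z i) * sgn (x i))) * ∏ i ∈ Sᶜ, (1:ℝ) := by
          simp [this]
      _ = ∏ i, (sgn (z i) * sgn (x i) + 1) := (Fintype.prod_add _ _).symm
      _ = if z = x then (2:ℝ)^n else 0 := by
          by_cases h : z = x
          · subst h
            rw [if_pos rfl, Finset.prod_congr rfl (g := fun _ => (2:ℝ)) (fun i _ => by
              rw [sgn_sq]; norm_num), Finset.prod_const]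
            simp
          · rw [if_neg h]
            obtain ⟨i, hi⟩ := Function.ne_iff.mp h
            apply Finset.prod_eq_zero (Finset.mem_univ i)
            rw [sgn_ne hi]; ring
  have step : ∀ S : Finset (Fin n), fCoeff f S * chi S x
      = (∑ z, f z * (chi S z * chi S x)) / (Fintype.card (Fin n → Bool) : ℝ) := by
    intro S
    rw [fCoeff, uexp, div_mul_eq_mul_div, Finset.sum_mul]
    congr 1
    exact Finset.sum_congr rfl fun z _ => by ring
  rw [Finset.sum_congr rfl (fun S _ => step S), ← Finset.sum_div, Finset.sum_comm]
  have e2 : ∀ z, ∑ S : Finset (Fin n), f z * (chi S z * chi S x)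
      = if z = x then f z * (2:ℝ)^n else 0 := by
    intro z
    rw [← Finset.mul_sum, key z, mul_ite, mul_zero]
  rw [Finset.sum_congr rfl (fun z _ => e2 z),
    Finset.sum_ite_eq' Finset.univ x (fun z => f z * (2:ℝ)^n)]
  simp [card_cube, mul_div_assoc]

/-- Plancherel -/
lemma plancherel {n : ℕ} (u h : (Fin n → Bool) → ℝ) :
    uexp (fun x => u x * h x) = ∑ S : Finset (Fin n), fCoeff u S * fCoeff h S := by
  have e : (fun x => u x * h x) = fun x => ∑ S : Finset (Fin n), fCoeff h S * (u x * chi S x) := by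
    funext x
    conv_lhs => rw [inversion h x]
    rw [Finset.mul_sum]
    exact Finset.sum_congr rfl fun S _ => by ring
  rw [e, uexp_sum]
  refine Finset.sum_congr rfl fun S _ => ?_
  rw [uexp_smul, show uexp (fun x => u x * chi S x) = fCoeff u S from rfl]
  ring

def flipE {n : ℕ} (i : Fin n) : (Fin n → Bool) ≃ (Fin n → Bool) where
  toFun x := Function.update x i (!(x i))
  invFun x := Function.update x i (!(x i))
  left_inv x := by
    funext j
    by_cases h : j = i
    · subst h; simp
    · simp [Function.update_of_ne h]
  right_inv x := by
    funext j
    by_cases h : j = i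
    · subst h; simp
    · simp [Function.update_of_ne h]

lemma sgn_not (b : Bool) : sgn (!b) = - sgn b := by cases b <;> simp [sgn]

lemma chi_flip {n : ℕ} {S : Finset (Fin n)} {i : Fin n} (hi : i ∈ S) (x : Fin n → Bool) :
    chi S (flipE i x) = - chi S x := by
  rw [chi, chi, ← Finset.mul_prod_erase _ _ hi, ← Finset.mul_prod_erase _ _ hi]
  have h1 : (flipE i x) i = !(x i) := by simp [flipE]
  have h2 : ∀ j ∈ S.erase i, (flipE i x) j = x j := by
    intro j hj
    have := Finset.ne_of_mem_erase hj
    simp [flipE, Function.update_of_ne this]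
  rw [h1, sgn_not, Finset.prod_congr rfl (fun j hj => by rw [h2 j hj])]
  ring

/-- coefficients of a junta vanish outside the junta set -/
lemma junta_coeff_zero {n : ℕ} {T : Finset (Fin n)} {h : (Fin n → Bool) → ℝ}
    (hj : ∀ x y, (∀ i ∈ T, x i = y i) → h x = h y)
    {S : Finset (Fin n)} (hS : ¬ S ⊆ T) : fCoeff h S = 0 := by
  obtain ⟨i, hiS, hiT⟩ : ∃ i, i ∈ S ∧ i ∉ T := by
    by_contra hc; push_neg at hc; exact hS fun i hi => hc i hi
  have key : ∑ x : Fin n → Bool, h x * chi S x = 0 := by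
    have e := Fintype.sum_equiv (flipE i) (fun x => h (flipE i x) * chi S (flipE i x))
      (fun x => h x * chi S x) (fun x => rfl)
    have e2 : ∀ x : Fin n → Bool, h (flipE i x) * chi S (flipE i x) = -(h x * chi S x) := by
      intro x
      rw [chi_flip hiS]
      have : h (flipE i x) = h x := by
        apply hj
        intro j hj2
        have : j ≠ i := fun hji => hiT (hji ▸ hj2)
        simp [flipE, Function.update_of_ne this]
      rw [this]; ring
    have := (Fintype.sum_congr _ _ e2).symm.trans e
    simp only [Finset.sum_neg_distrib] at this
    linarith
  rw [fCoeff, uexp, key, zero_div]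

/-- counting: number of points agreeing with x on T -/
lemma card_agree {n : ℕ} (T : Finset (Fin n)) (x : Fin n → Bool) :
    ((Finset.univ.filter (fun a : Fin n → Bool => ∀ i ∈ T, x i = a i)).card : ℝ)
      = 2 ^ (n - T.card) := by
  classical
  rw [Finset.card_filter]
  push_cast
  have e : ∀ a : Fin n → Bool, (if ∀ i ∈ T, x i = a i then (1:ℝ) else 0)
      = ∏ i, (if i ∈ T then (if x i = a i then (1:ℝ) else 0) else 1) := by
    intro a
    by_cases h : ∀ i ∈ T, x i = a i
    · rw [if_pos h]
      refine (Finset.prod_eq_one fun i _ => ?_).symm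
      by_cases hi : i ∈ T
      · simp [hi, h i hi]
      · simp [hi]
    · rw [if_neg h]
      push_neg at h
      obtain ⟨i, hiT, hne⟩ := h
      exact (Finset.prod_eq_zero (Finset.mem_univ i) (by simp [hiT, hne])).symm
  rw [Finset.sum_congr rfl fun a _ => e a]
  rw [show (∑ a : Fin n → Bool, ∏ i, (if i ∈ T then (if x i = a i then (1:ℝ) else 0) else 1))
    = ∏ i, ((if i ∈ T then (if x i = false then (1:ℝ) else 0) else 1)
      + (if i ∈ T then (if x i = true then (1:ℝ) else 0) else 1)) from ?_]
  · have : ∀ i : Fin n, ((if i ∈ T then (if x i = false then (1:ℝ) else 0) else 1)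
      + (if i ∈ T then (if x i = true then (1:ℝ) else 0) else 1))
        = if i ∈ T then 1 else 2 := by
      intro i
      by_cases hi : i ∈ T
      · cases hxi : x i <;> simp [hi, hxi]
      · simp [hi]; norm_num
    rw [Finset.prod_congr rfl fun i _ => this i,
      ← Finset.prod_mul_prod_compl T (fun i => if i ∈ T then (1:ℝ) else 2)]
    rw [Finset.prod_congr rfl (fun i hi => if_pos hi),
      Finset.prod_congr rfl (fun i (hi : i ∈ Tᶜ) => if_neg (Finset.mem_compl.mp hi)),
      Finset.prod_const, Finset.prod_const, Finset.card_compl]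
    simp
  · exact sum_cube_prod (fun i b => if i ∈ T then (if x i = b then (1:ℝ) else 0) else 1)
def dotp {α : Type*} [Fintype α] (y w : α → ℝ) : ℝ := ∑ x, y x * w x

lemma dotp_nonneg_self {α : Type*} [Fintype α] (y : α → ℝ) : 0 ≤ dotp y y :=
  Finset.sum_nonneg fun x _ => mul_self_nonneg _

lemma dotp_self_pos {α : Type*} [Fintype α] {y : α → ℝ} (hy : y ≠ 0) : 0 < dotp y y := by
  rcases Function.ne_iff.mp hy with ⟨a, ha⟩
  apply Finset.sum_pos' (fun x _ => mul_self_nonneg _)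
  exact ⟨a, Finset.mem_univ a, mul_self_pos.mpr ha⟩

lemma dotp_sub_smul {α : Type*} [Fintype α] (y u : α → ℝ) (c : ℝ) (w : α → ℝ) :
    dotp y (fun x => u x - c * w x) = dotp y u - c * dotp y w := by
  simp only [dotp, mul_sub, Finset.sum_sub_distrib, Finset.mul_sum]
  congr 1
  exact Finset.sum_congr rfl fun x _ => by ring

lemma dotp_sub_smul_left {α : Type*} [Fintype α] (y u : α → ℝ) (c : ℝ) (w : α → ℝ) :
    dotp (fun x => u x - c * y x) w = dotp u w - c * dotp y w := by
  simp only [dotp, Finset.mul_sum]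
  rw [← Finset.sum_sub_distrib]
  exact Finset.sum_congr rfl fun x _ => by ring

/-- Farkas lemma, algebraic induction -/
theorem farkas {α : Type*} [Fintype α] :
    ∀ (m : ℕ) (v : Fin m → α → ℝ) (b : α → ℝ),
    (¬ ∃ c : Fin m → ℝ, (∀ i, 0 ≤ c i) ∧ ∀ x, b x = ∑ i, c i * v i x) →
    ∃ y : α → ℝ, (∀ i, 0 ≤ dotp y (v i)) ∧ dotp y b < 0 := by
  intro m
  induction m with
  | zero =>
    intro v b hb
    have hbne : b ≠ 0 := by
      rintro rfl
      exact hb ⟨fun i => 0, fun i => le_refl 0, fun x => by simp⟩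
    refine ⟨fun x => - b x, fun i => Fin.elim0 i, ?_⟩
    have : dotp (fun x => - b x) b = - dotp b b := by
      simp only [dotp, neg_mul, Finset.sum_neg_distrib]
    rw [this]
    linarith [dotp_self_pos hbne]
  | succ m ih =>
    intro v b hb
    set w : Fin m → α → ℝ := fun i => v i.succ with hw
    have htail : ¬ ∃ c : Fin m → ℝ, (∀ i, 0 ≤ c i) ∧ ∀ x, b x = ∑ i, c i * w i x := by
      rintro ⟨c, hc, hsum⟩
      refine hb ⟨Fin.cases 0 c, ?_, ?_⟩
      · intro i
        refine Fin.cases ?_ ?_ i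
        · exact le_refl 0
        · intro j; exact hc j
      · intro x
        rw [Fin.sum_univ_succ]
        simp only [Fin.cases_zero, Fin.cases_succ, zero_mul, zero_add]
        exact hsum x
    obtain ⟨y, hy, hyb⟩ := ih w b htail
    by_cases h0 : 0 ≤ dotp y (v 0)
    · refine ⟨y, fun i => ?_, hyb⟩
      refine Fin.cases h0 (fun j => hy j) i
    · push_neg at h0
      set d0 := dotp y (v 0) with hd0
      set v' : Fin m → α → ℝ := fun i x => w i x - (dotp y (w i) / d0) * v 0 x with hv'
      set b' : α → ℝ := fun x => b x - (dotp y b / d0) * v 0 x with hb'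
      have hproj : ¬ ∃ c : Fin m → ℝ, (∀ i, 0 ≤ c i) ∧ ∀ x, b' x = ∑ i, c i * v' i x := by
        rintro ⟨c, hc, hsum⟩
        set c0 := (dotp y b - ∑ i, c i * dotp y (w i)) / d0 with hc0
        have hc0pos : 0 < c0 := by
          apply div_pos_of_neg_of_neg _ h0
          have : 0 ≤ ∑ i, c i * dotp y (w i) :=
            Finset.sum_nonneg fun i _ => mul_nonneg (hc i) (hy i)
          linarith
        refine hb ⟨Fin.cases c0 c, ?_, ?_⟩
        · intro i
          refine Fin.cases (le_of_lt hc0pos) (fun j => hc j) i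
        · intro x
          rw [Fin.sum_univ_succ]
          simp only [Fin.cases_zero, Fin.cases_succ]
          have expand := hsum x
          simp only [hv', hb'] at expand
          have : b x = (dotp y b / d0) * v 0 x + ∑ i, c i * (w i x - dotp y (w i) / d0 * v 0 x) := by
            linarith [expand]
          rw [this, hc0]
          have swap : (∑ i : Fin m, c i * v i.succ x) = ∑ i : Fin m, c i * w i x := rfl
          rw [swap]
          have e1 : ∀ i : Fin m, c i * (w i x - dotp y (w i) / d0 * v 0 x)
              = c i * w i x - (c i * dotp y (w i)) * (v 0 x / d0) := by intro i; ring
          rw [Finset.sum_congr rfl fun i _ => e1 i, Finset.sum_sub_distrib, ← Finset.sum_mul]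
          ring
      obtain ⟨y', hy', hy'b⟩ := ih v' b' hproj
      set z : α → ℝ := fun x => y' x - (dotp y' (v 0) / d0) * y x with hz
      have hzdot : ∀ u : α → ℝ, dotp z u = dotp y' u - (dotp y' (v 0) / d0) * dotp y u := by
        intro u
        exact dotp_sub_smul_left y y' (dotp y' (v 0) / d0) u
      refine ⟨z, ?_, ?_⟩
      · intro i
        refine Fin.cases ?_ ?_ i
        · rw [hzdot (v 0)]
          have hd0ne : d0 ≠ 0 := ne_of_lt h0
          field_simp
          rw [← hd0, sub_self, mul_zero, zero_div]
        · intro j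
          rw [hzdot (w j)]
          have := hy' j
          rw [show dotp y' (v' j) = dotp y' (w j) - (dotp y (w j) / d0) * dotp y' (v 0) from
            dotp_sub_smul y' (w j) _ (v 0)] at this
          have hexp : dotp y' (w j) - dotp y' (v 0) / d0 * dotp y (w j)
              = dotp y' (w j) - dotp y (w j) / d0 * dotp y' (v 0) := by ring
          linarith [hexp ▸ this]
      · rw [hzdot b]
        have := hy'b
        rw [show dotp y' b' = dotp y' b - (dotp y b / d0) * dotp y' (v 0) from
          dotp_sub_smul y' b _ (v 0)] at this
        have e : dotp y' (v 0) / d0 * dotp y b = dotp y b / d0 * dotp y' (v 0) := by ring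
        linarith

lemma sum_choose_le : ∀ D n : ℕ, 2 ≤ D → D < n →
    ∑ k ∈ Finset.range (D+1), n.choose k ≤ n ^ D := by
  intro D
  induction D with
  | zero => intro n h; omega
  | succ D ih =>
    intro n h2 hn
    rcases Nat.lt_or_ge D 2 with hD | hD
    · -- D + 1 = 2
      have hD1 : D = 1 := by omega
      subst hD1
      have hch : n.choose 2 * 2 = n.choose 1 * (n - 1) := Nat.choose_succ_right_eq n 1
      rw [Nat.choose_one_right] at hch
      obtain ⟨m, rfl⟩ : ∃ m, n = m + 3 := ⟨n - 3, by omega⟩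
      rw [Finset.sum_range_succ, Finset.sum_range_succ, Finset.sum_range_one]
      rw [Nat.choose_zero_right, Nat.choose_one_right]
      have h3 : m + 3 - 1 = m + 2 := by omega
      rw [h3] at hch
      have e2 : (m+3).choose (1+1) = (m+3).choose 2 := by norm_num
      rw [e2]
      have e3 : (m+3) ^ (1+1) = (m+3)*(m+3) := by ring
      rw [e3]
      nlinarith [hch]
    · have hDn : D < n := by omega
      have hsum := ih n hD hDn
      have hCD : n.choose D ≤ n ^ D := le_trans (Finset.single_le_sum
        (f := fun k => n.choose k) (fun k _ => Nat.zero_le _)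
        (Finset.self_mem_range_succ D)) hsum
      have hch : n.choose (D+1) * (D+1) = n.choose D * (n - D) := Nat.choose_succ_right_eq n D
      have h1 : n.choose (D+1) ≤ n.choose (D+1) * (D+1) := Nat.le_mul_of_pos_right _ (by omega)
      have h2' : n.choose D * (n - D) ≤ n ^ D * (n - 1) :=
        Nat.mul_le_mul hCD (by omega)
      rw [Finset.sum_range_succ]
      have : n ^ D + n ^ D * (n - 1) = n ^ (D+1) := by
        have : 1 + (n - 1) = n := by omega
        calc n ^ D + n ^ D * (n-1) = n ^ D * (1 + (n-1)) := by ring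
          _ = n ^ D * n := by rw [this]
          _ = n ^ (D+1) := by ring
      omega
lemma coeff_card_le_fdeg {n : ℕ} {f : (Fin n → Bool) → ℝ} {S : Finset (Fin n)}
    (h : fCoeff f S ≠ 0) : S.card ≤ fdeg f := by
  classical
  apply Finset.le_sup (f := Finset.card)
  simp only [Finset.mem_filter, Finset.mem_univ, true_and]
  convert h

lemma low_deg_conical {n : ℕ} (f : (Fin n → Bool) → ℝ) (hf : ∀ x, 0 ≤ f x)
    (η : ℝ) (hη : 0 < η) (D : ℕ) (hdeg : fdeg f ≤ D) (hD : D ≤ 1) :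
    IsConicalJunta D (fun x => f x + η) := by
  classical
  set a : Fin n → ℝ := fun i => fCoeff f {i} with ha
  set a0 : ℝ := fCoeff f ∅ with ha0
  have hvan : ∀ S : Finset (Fin n), 2 ≤ S.card → fCoeff f S = 0 := by
    intro S hS
    by_contra hne
    have := coeff_card_le_fdeg hne
    omega
  have hinv : ∀ x, f x = a0 + ∑ i, a i * sgn (x i) := by
    intro x
    have h1 := inversion f x
    set A : Finset (Finset (Fin n)) :=
      insert ∅ (Finset.univ.image fun i : Fin n => ({i} : Finset (Fin n))) with hA
    have h2 : ∑ S : Finset (Fin n), fCoeff f S * chi S x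
        = ∑ S ∈ A, fCoeff f S * chi S x := by
      symm
      apply Finset.sum_subset (Finset.subset_univ A)
      intro S _ hSA
      have hcard : 2 ≤ S.card := by
        by_contra hc
        push_neg at hc
        interval_cases h : S.card
        · exact hSA (by simp [hA, Finset.card_eq_zero.mp h])
        · obtain ⟨i, rfl⟩ := Finset.card_eq_one.mp h
          exact hSA (by simp [hA])
      rw [hvan S hcard, zero_mul]
    have hni : (∅ : Finset (Fin n)) ∉ Finset.univ.image fun i : Fin n => ({i} : Finset (Fin n)) := by
      simp only [Finset.mem_image, Finset.mem_univ, true_and]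
      rintro ⟨i, hi⟩
      exact Finset.singleton_ne_empty i hi
    rw [h1, h2, hA, Finset.sum_insert hni, Finset.sum_image
      (fun i _ j _ h => Finset.singleton_injective h)]
    simp only [chi, Finset.prod_empty, mul_one, Finset.prod_singleton]
    rfl
  set xs : Fin n → Bool := fun i => decide (0 < a i) with hxs
  have hterm : ∀ i, a i * sgn (xs i) = -|a i| := by
    intro i
    by_cases hpos : 0 < a i
    · simp [hxs, hpos, sgn, abs_of_pos hpos]
    · push_neg at hpos
      simp [hxs, not_lt.mpr hpos, sgn, abs_of_nonpos hpos]
  have hfs : f xs = a0 - ∑ i, |a i| := by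
    rw [hinv xs, Finset.sum_congr rfl fun i _ => hterm i]
    rw [Finset.sum_neg_distrib]
    ring
  set s : Fin n → ℝ := fun i => if 0 ≤ a i then 1 else -1 with hs
  have hsa : ∀ i, |a i| * s i = a i := by
    intro i
    by_cases h : 0 ≤ a i
    · simp [hs, h, abs_of_nonneg h]
    · push_neg at h
      simp [hs, not_le.mpr h, abs_of_neg h]
  refine ⟨n+1, Fin.snoc (fun i => |a i|) (f xs + η),
    Fin.snoc (fun i x => if a i = 0 then 1 else 1 + s i * sgn (x i)) (fun _ => 1),
    ?_, ?_, ?_, ?_⟩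
  · intro i
    refine Fin.lastCases ?_ ?_ i
    · rw [Fin.snoc_last]
      have := hf xs
      linarith
    · intro j
      rw [Fin.snoc_castSucc]
      exact abs_nonneg _
  · intro i x
    refine Fin.lastCases ?_ ?_ i
    · rw [Fin.snoc_last]; norm_num
    · intro j
      rw [Fin.snoc_castSucc]
      by_cases h : a j = 0
      · simp [h]
      · rw [if_neg h]
        have h1 : s j = 1 ∨ s j = -1 := by
          by_cases h' : 0 ≤ a j
          · left; simp [hs, h']
          · right; simp [hs, h']
        have h2 : sgn (x j) = 1 ∨ sgn (x j) = -1 := by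
          cases hxj : x j <;> simp [sgn]
        rcases h1 with h1 | h1 <;> rcases h2 with h2 | h2 <;> rw [h1, h2] <;> norm_num
  · intro i
    refine Fin.lastCases ?_ ?_ i
    · rw [Fin.snoc_last]
      exact ⟨∅, by simp, fun x y _ => rfl⟩
    · intro j
      rw [Fin.snoc_castSucc]
      by_cases h : a j = 0
      · exact ⟨∅, by simp, fun x y _ => by simp [h]⟩
      · refine ⟨{j}, ?_, fun x y hxy => ?_⟩
        · have : (1:ℕ) ≤ D := by
            have := coeff_card_le_fdeg (f := f) (S := {j}) h
            simp only [Finset.card_singleton] at this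
            omega
          simpa using this
        · show (if a j = 0 then (1:ℝ) else 1 + s j * sgn (x j))
              = (if a j = 0 then 1 else 1 + s j * sgn (y j))
          rw [hxy j (Finset.mem_singleton_self j)]
  · intro x
    rw [Fin.sum_univ_castSucc]
    simp only [Fin.snoc_castSucc, Fin.snoc_last, mul_one]
    have hterm2 : ∀ i : Fin n, |a i| * (if a i = 0 then 1 else 1 + s i * sgn (x i))
        = |a i| + a i * sgn (x i) := by
      intro i
      by_cases h : a i = 0
      · simp [h]
      · rw [if_neg h, mul_add, mul_one, ← mul_assoc, hsa]
    rw [Finset.sum_congr rfl fun i _ => hterm2 i, Finset.sum_add_distrib]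
    rw [hinv x, hfs]
    ring

lemma trunc_key {n D : ℕ} (u h : (Fin n → Bool) → ℝ)
    (hh : ∀ S : Finset (Fin n), ¬ S.card ≤ D → fCoeff h S = 0) :
    uexp (fun x => (∑ S ∈ Finset.univ.filter (fun S : Finset (Fin n) => S.card ≤ D),
      fCoeff u S * chi S x) * h x) = uexp (fun x => u x * h x) := by
  classical
  rw [plancherel, plancherel u h]
  refine Finset.sum_congr rfl fun S _ => ?_
  rw [show fCoeff (fun x => ∑ S ∈ Finset.univ.filter (fun S : Finset (Fin n) => S.card ≤ D),
      fCoeff u S * chi S x) S = if S ∈ Finset.univ.filter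
        (fun S : Finset (Fin n) => S.card ≤ D) then fCoeff u S else 0 from
    fCoeff_sum_chi _ _ S]
  by_cases hS : S.card ≤ D
  · rw [if_pos (by simp [hS])]
  · rw [if_neg (by simp [hS]), hh S hS]; simp

lemma card_small_sets (n D : ℕ) :
    (Finset.univ.filter (fun S : Finset (Fin n) => S.card ≤ D)).card
      = ∑ k ∈ Finset.range (D+1), n.choose k := by
  classical
  have e : Finset.univ.filter (fun S : Finset (Fin n) => S.card ≤ D)
      = (Finset.range (D+1)).biUnion (fun k => Finset.powersetCard k Finset.univ) := by
    ext S
    simp only [Finset.mem_filter, Finset.mem_univ, true_and, Finset.mem_biUnion,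
      Finset.mem_range, Finset.mem_powersetCard, Nat.lt_succ_iff]
    constructor
    · intro hS
      exact ⟨S.card, hS, Finset.subset_univ S, rfl⟩
    · rintro ⟨k, hk, _, rfl⟩
      exact hk
  rw [e, Finset.card_biUnion]
  · refine Finset.sum_congr rfl fun k _ => ?_
    rw [Finset.card_powersetCard, Finset.card_univ, Fintype.card_fin]
  · intro i hi j hj hij
    rw [Function.onFun, Finset.disjoint_left]
    intro S hSi hSj
    rw [Finset.mem_powersetCard] at hSi hSj
    exact hij (by rw [← hSi.2, hSj.2])

lemma gen_nonneg {n D : ℕ} (T : Finset (Fin n)) (aa x : Fin n → Bool) :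
    0 ≤ (if T.card ≤ D then (if ∀ i ∈ T, x i = aa i then (1:ℝ) else 0) else 0) := by
  split_ifs <;> norm_num

lemma gen_is_junta {n D : ℕ} (T : Finset (Fin n)) (aa : Fin n → Bool) :
    IsJunta D (fun x => if T.card ≤ D then (if ∀ i ∈ T, x i = aa i then (1:ℝ) else 0) else 0) := by
  by_cases hp : T.card ≤ D
  · refine ⟨T, hp, fun x y hxy => ?_⟩
    simp only [if_pos hp]
    refine if_congr ?_ rfl rfl
    constructor <;> intro h i hi
    · rw [← hxy i hi]; exact h i hi
    · rw [hxy i hi]; exact h i hi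
  · exact ⟨∅, by simp, fun x y _ => by simp only [if_neg hp]⟩

end Aux
/-- existence of a well-behaved separating functional when
`deg(f) ≤ D < deg₊(f+η)`. -/
theorem stmt7 (n : ℕ) (f : (Fin n → Bool) → ℝ) (hf : ∀ x, 0 ≤ f x)
    (η : ℝ) (hη : 0 < η) (D : ℕ)
    (hdeg : fdeg f ≤ D) (hdegp : D < degPlus (fun x => f x + η)) :
    ∃ L : (Fin n → Bool) → ℝ,
      fdeg L ≤ D ∧
      uexp L = 1 ∧
      uexp (fun x => L x * f x) < -η ∧
      (∀ h : (Fin n → Bool) → ℝ, IsConicalJunta D h → 0 ≤ uexp (fun x => L x * h x)) ∧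
      (∀ S : Finset (Fin n), S.card ≤ D → |fCoeff L S| ≤ 1) ∧
      (∀ x, |L x| ≤ (n : ℝ) ^ D) := by
  classical
  -- rule out degenerate degrees
  by_cases hDle : D ≤ 1
  · exfalso
    have h1 := Aux.low_deg_conical f hf η hη D hdeg hDle
    have h2 : degPlus (fun x => f x + η) ≤ D := Nat.sInf_le h1
    omega
  push_neg at hDle
  have hD2 : 2 ≤ D := hDle
  have hDn : D < n := by
    have hconc : IsConicalJunta n (fun x => f x + η) := by
      refine ⟨1, fun _ => 1, fun _ x => f x + η, fun _ => zero_le_one, fun _ x => ?_,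
        fun _ => ⟨Finset.univ, by simp, fun x y hxy => ?_⟩, fun x => by simp⟩
      · show 0 ≤ f x + η
        have := hf x; linarith
      · have : x = y := funext fun i => hxy i (Finset.mem_univ i)
        rw [this]
    have h3 : degPlus (fun x => f x + η) ≤ n :=
      Nat.sInf_le (show n ∈ {d | IsConicalJunta d (fun x => f x + η)} from hconc)
    omega
  have hnc : ¬ IsConicalJunta D (fun x => f x + η) := by
    intro hcj
    have h3 : degPlus (fun x => f x + η) ≤ D :=
      Nat.sInf_le (show D ∈ {d | IsConicalJunta d (fun x => f x + η)} from hcj)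
    omega
  -- Farkas
  obtain ⟨y, hyv, hyb⟩ := Aux.farkas (Fintype.card (Finset (Fin n) × (Fin n → Bool)))
    (fun k => (fun p : Finset (Fin n) × (Fin n → Bool) => fun x : Fin n → Bool =>
        if p.1.card ≤ D then (if ∀ i ∈ p.1, x i = p.2 i then (1:ℝ) else 0) else 0)
      ((Fintype.equivFin (Finset (Fin n) × (Fin n → Bool))).symm k))
    (fun x => f x + η)
    (by
      rintro ⟨c, hc, hsum⟩
      apply hnc
      refine ⟨_, c, _, hc, ?_, ?_, hsum⟩
      · intro i x
        exact Aux.gen_nonneg _ _ x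
      · intro k
        exact Aux.gen_is_junta _ _)
  -- generator constraints
  have hgen : ∀ (T : Finset (Fin n)) (aa : Fin n → Bool), T.card ≤ D →
      0 ≤ Aux.dotp y (fun x => if ∀ i ∈ T, x i = aa i then (1:ℝ) else 0) := by
    intro T aa hT
    have h := hyv (Fintype.equivFin (Finset (Fin n) × (Fin n → Bool)) (T, aa))
    rw [Equiv.symm_apply_apply] at h
    simpa [hT] using h
  -- nonneg juntas
  have hjunta : ∀ g : (Fin n → Bool) → ℝ, (∀ z, 0 ≤ g z) → IsJunta D g →
      0 ≤ Aux.dotp y g := by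
    rintro g hg ⟨T, hT, hjp⟩
    have key : ∑ a : Fin n → Bool,
        g a * Aux.dotp y (fun x => if ∀ i ∈ T, x i = a i then (1:ℝ) else 0)
        = 2 ^ (n - T.card) * Aux.dotp y g := by
      simp only [Aux.dotp, Finset.mul_sum]
      rw [Finset.sum_comm]
      refine Finset.sum_congr rfl fun x _ => ?_
      have e : ∀ a : Fin n → Bool, g a * (y x * (if ∀ i ∈ T, x i = a i then (1:ℝ) else 0))
          = (if ∀ i ∈ T, x i = a i then g a * y x else 0) := by
        intro a; split <;> simp <;> ring
      rw [Finset.sum_congr rfl fun a _ => e a, Finset.sum_ite, Finset.sum_const_zero, add_zero]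
      have e2 : ∀ a ∈ Finset.univ.filter (fun a : Fin n → Bool => ∀ i ∈ T, x i = a i),
          g a * y x = g x * y x := by
        intro a ha
        rw [Finset.mem_filter] at ha
        rw [hjp a x fun i hi => (ha.2 i hi).symm]
      rw [Finset.sum_congr rfl e2, Finset.sum_const, nsmul_eq_mul, Aux.card_agree T x]
      ring
    have h1 : 0 ≤ ∑ a : Fin n → Bool,
        g a * Aux.dotp y (fun x => if ∀ i ∈ T, x i = a i then (1:ℝ) else 0) :=
      Finset.sum_nonneg fun a _ => mul_nonneg (hg a) (hgen T a hT)
    rw [key] at h1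
    have hpow : (0:ℝ) < 2 ^ (n - T.card) := by positivity
    nlinarith [h1, hpow]
  -- truncation
  set Sfil : Finset (Finset (Fin n)) :=
    Finset.univ.filter (fun S : Finset (Fin n) => S.card ≤ D) with hSfil
  set L0 : (Fin n → Bool) → ℝ := fun x => ∑ S ∈ Sfil, fCoeff y S * chi S x with hL0
  set E : ℝ := fCoeff y ∅ with hE
  have hcard_pos := Aux.card_cube_pos n
  have htrunc : ∀ h : (Fin n → Bool) → ℝ,
      (∀ S : Finset (Fin n), ¬ S.card ≤ D → fCoeff h S = 0) →
      uexp (fun x => L0 x * h x) = uexp (fun x => y x * h x) := by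
    intro h hh
    rw [hL0, hSfil]
    exact Aux.trunc_key y h hh
  have hjcoeff : ∀ g : (Fin n → Bool) → ℝ, IsJunta D g →
      ∀ S : Finset (Fin n), ¬ S.card ≤ D → fCoeff g S = 0 := by
    rintro g ⟨T, hT, hjp⟩ S hS
    apply Aux.junta_coeff_zero hjp
    intro hsub
    exact hS (le_trans (Finset.card_le_card hsub) hT)
  have hL0conic : ∀ h, IsConicalJunta D h → 0 ≤ uexp (fun x => L0 x * h x) := by
    rintro h ⟨N, cc, gg, hcc, hgg, hjj, hrep⟩
    have e : (fun x => L0 x * h x) = fun x => ∑ i : Fin N, cc i * (L0 x * gg i x) := by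
      funext x; rw [hrep x, Finset.mul_sum]; exact Finset.sum_congr rfl fun i _ => by ring
    rw [e, Aux.uexp_sum]
    refine Finset.sum_nonneg fun i _ => ?_
    rw [Aux.uexp_smul]
    refine mul_nonneg (hcc i) ?_
    rw [htrunc (gg i) (hjcoeff (gg i) (hjj i))]
    rw [show uexp (fun x => y x * gg i x)
      = Aux.dotp y (gg i) / (Fintype.card (Fin n → Bool) : ℝ) from rfl]
    exact div_nonneg (hjunta (gg i) (hgg i) (hjj i)) (le_of_lt hcard_pos)
  have hbcoeff : ∀ S : Finset (Fin n), ¬ S.card ≤ D → fCoeff (fun x => f x + η) S = 0 := by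
    intro S hS
    have h1 : fCoeff f S = 0 := by
      by_contra hne
      exact hS (le_trans (Aux.coeff_card_le_fdeg hne) hdeg)
    have h2 : fCoeff (fun x => f x + η) S = fCoeff f S + η * (if S = ∅ then 1 else 0) := by
      show uexp (fun x => (f x + η) * chi S x) = _
      have e : (fun x => (f x + η) * chi S x) = fun x => f x * chi S x + η * chi S x := by
        funext x; ring
      rw [e, Aux.uexp_add, Aux.uexp_smul, Aux.uexp_chi]
      rfl
    rw [h2, h1]
    have hne : S ≠ ∅ := by
      intro h; rw [h] at hS; simp at hS
    simp [hne]
  have hL0b : uexp (fun x => L0 x * (f x + η)) < 0 := by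
    rw [htrunc _ hbcoeff]
    rw [show uexp (fun x => y x * (f x + η))
      = Aux.dotp y (fun x => f x + η) / (Fintype.card (Fin n → Bool) : ℝ) from rfl]
    exact div_neg_of_neg_of_pos hyb hcard_pos
  have hmem0 : (∅ : Finset (Fin n)) ∈ Sfil := by rw [hSfil]; simp
  have hsum_ite_empty : ∀ d : Finset (Fin n) → ℝ,
      ∑ S ∈ Sfil, d S * (if S = ∅ then 1 else 0) = d ∅ := by
    intro d
    have e : ∀ S ∈ Sfil, d S * (if S = ∅ then 1 else 0) = if S = ∅ then d S else 0 := by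
      intro S _; split <;> simp
    rw [Finset.sum_congr rfl e, Finset.sum_ite_eq' Sfil ∅ d, if_pos hmem0]
  have huL0 : uexp L0 = E := by
    rw [hL0, Aux.uexp_sum]
    have e : ∀ S ∈ Sfil, uexp (fun x => fCoeff y S * chi S x)
        = fCoeff y S * (if S = ∅ then 1 else 0) := by
      intro S _
      rw [Aux.uexp_smul, Aux.uexp_chi]
    rw [Finset.sum_congr rfl e, hsum_ite_empty (fun S => fCoeff y S)]
  have hE0 : 0 ≤ E := by
    have h1 : IsConicalJunta D (fun _ : Fin n → Bool => (1:ℝ)) :=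
      ⟨1, fun _ => 1, fun _ _ => 1, fun _ => zero_le_one, fun _ _ => zero_le_one,
        fun _ => ⟨∅, by simp, fun _ _ _ => rfl⟩, fun x => by simp⟩
    have h2 := hL0conic _ h1
    simpa [huL0] using h2
  have hsplit : uexp (fun x => L0 x * (f x + η)) = uexp (fun x => L0 x * f x) + η * E := by
    have e : (fun x => L0 x * (f x + η)) = fun x => L0 x * f x + η * L0 x := by
      funext x; ring
    rw [e, Aux.uexp_add, Aux.uexp_smul, huL0]
  obtain ⟨α, β, hα, hβ, hnorm, hsep⟩ :
      ∃ α β : ℝ, 0 ≤ α ∧ 0 ≤ β ∧ α * E + β = 1 ∧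
        α * uexp (fun x => L0 x * f x) + β * uexp f < -η := by
    rcases eq_or_lt_of_le hE0 with hEz | hEpos
    · have hp : uexp (fun x => L0 x * f x) < 0 := by
        rw [hsplit, ← hEz] at hL0b
        linarith
      have hfpos : 0 ≤ uexp f := Aux.uexp_nonneg hf
      refine ⟨(uexp f + η + 1) / (-(uexp (fun x => L0 x * f x))), 1, ?_, zero_le_one,
        by rw [← hEz]; ring, ?_⟩
      · apply div_nonneg <;> linarith
      · have hne : uexp (fun x => L0 x * f x) ≠ 0 := ne_of_lt hp
        have e : (uexp f + η + 1) / (-(uexp (fun x => L0 x * f x)))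
            * uexp (fun x => L0 x * f x) = -(uexp f + η + 1) := by
          rw [div_mul_eq_mul_div, mul_div_assoc, div_neg, div_self hne]
          ring
        rw [e]
        linarith
    · refine ⟨E⁻¹, 0, le_of_lt (inv_pos.mpr hEpos), le_refl 0, by field_simp; norm_num, ?_⟩
      have hp : uexp (fun x => L0 x * f x) < -η * E := by
        rw [hsplit] at hL0b
        linarith
      rw [zero_mul, add_zero, inv_mul_eq_div, div_lt_iff₀ hEpos]
      linarith
  -- the final functional
  set d : Finset (Fin n) → ℝ :=
    fun S => α * fCoeff y S + β * (if S = ∅ then 1 else 0) with hd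
  set L : (Fin n → Bool) → ℝ := fun x => ∑ S ∈ Sfil, d S * chi S x with hL
  have hLpt : ∀ x, L x = α * L0 x + β := by
    intro x
    rw [hL]
    show ∑ S ∈ Sfil, d S * chi S x = _
    have e : ∀ S ∈ Sfil, d S * chi S x
        = α * (fCoeff y S * chi S x) + β * ((if S = ∅ then 1 else 0) * chi S x) := by
      intro S _; rw [hd]; ring
    rw [Finset.sum_congr rfl e, Finset.sum_add_distrib, ← Finset.mul_sum, ← Finset.mul_sum]
    have e2 : ∀ S ∈ Sfil, (if S = ∅ then (1:ℝ) else 0) * chi S x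
        = if S = ∅ then chi S x else 0 := by
      intro S _; split <;> simp
    rw [Finset.sum_congr rfl e2, Finset.sum_ite_eq' Sfil ∅ (fun S => chi S x), if_pos hmem0]
    have e3 : chi (∅ : Finset (Fin n)) x = 1 := by simp [chi]
    rw [e3, mul_one, hL0]
  have hcoeffL : ∀ S : Finset (Fin n), fCoeff L S = if S ∈ Sfil then d S else 0 := by
    intro S
    rw [hL]
    exact Aux.fCoeff_sum_chi Sfil d S
  have hmemSfil : ∀ S : Finset (Fin n), S ∈ Sfil ↔ S.card ≤ D := by
    intro S; rw [hSfil]; simp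
  have huexpL : uexp L = 1 := by
    rw [hL, Aux.uexp_sum]
    have e : ∀ S ∈ Sfil, uexp (fun x => d S * chi S x) = d S * (if S = ∅ then 1 else 0) := by
      intro S _
      rw [Aux.uexp_smul, Aux.uexp_chi]
    rw [Finset.sum_congr rfl e, hsum_ite_empty d, hd]
    norm_num
    rw [← hE]
    exact hnorm
  have hLconic : ∀ h, IsConicalJunta D h → 0 ≤ uexp (fun x => L x * h x) := by
    intro h hh
    have e : (fun x => L x * h x) = fun x => α * (L0 x * h x) + β * h x := by
      funext x; rw [hLpt x]; ring
    rw [e, Aux.uexp_add, Aux.uexp_smul, Aux.uexp_smul]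
    have hpt : ∀ x, 0 ≤ h x := by
      obtain ⟨N, cc, gg, hcc, hgg, _, hrep⟩ := hh
      intro x
      rw [hrep x]
      exact Finset.sum_nonneg fun i _ => mul_nonneg (hcc i) (hgg i x)
    exact add_nonneg (mul_nonneg hα (hL0conic h hh)) (mul_nonneg hβ (Aux.uexp_nonneg hpt))
  have habs : ∀ S : Finset (Fin n), S.card ≤ D → |fCoeff L S| ≤ 1 := by
    intro S hS
    have key : ∀ e : ℝ, e = 1 ∨ e = -1 → 0 ≤ 1 + e * fCoeff L S := by
      intro e he
      have hcj : IsConicalJunta D (fun x => 1 + e * chi S x) := by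
        refine ⟨1, fun _ => 1, fun _ x => 1 + e * chi S x, fun _ => zero_le_one,
          fun _ x => ?_, fun _ => ⟨S, hS, fun x z hxz => ?_⟩, fun x => by simp⟩
        · show 0 ≤ 1 + e * chi S x
          have h1 := Aux.abs_chi S x
          have h2 := abs_le.mp (le_of_eq h1)
          rcases he with rfl | rfl <;> simp <;> linarith [h2.1, h2.2]
        · show 1 + e * chi S x = 1 + e * chi S z
          have : chi S x = chi S z := by
            rw [chi, chi]
            exact Finset.prod_congr rfl fun i hi => by rw [hxz i hi]
          rw [this]
      have h3 := hLconic _ hcj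
      have e5 : uexp (fun x => L x * (1 + e * chi S x)) = 1 + e * fCoeff L S := by
        have e4 : (fun x => L x * (1 + e * chi S x)) = fun x => L x + e * (L x * chi S x) := by
          funext x; ring
        rw [e4, Aux.uexp_add, Aux.uexp_smul, huexpL]
        rfl
      rw [e5] at h3
      exact h3
    have k1 := key 1 (Or.inl rfl)
    have k2 := key (-1) (Or.inr rfl)
    rw [abs_le]
    constructor <;> linarith
  refine ⟨L, ?_, huexpL, ?_, hLconic, habs, ?_⟩
  · -- degree bound
    apply Finset.sup_le
    intro S hS
    rw [Finset.mem_filter] at hS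
    by_contra hc
    push_neg at hc
    have hnot : S ∉ Sfil := by
      rw [hmemSfil]
      omega
    exact hS.2 (by rw [hcoeffL S, if_neg hnot])
  · -- separation
    have e : (fun x => L x * f x) = fun x => α * (L0 x * f x) + β * f x := by
      funext x; rw [hLpt x]; ring
    rw [e, Aux.uexp_add, Aux.uexp_smul, Aux.uexp_smul]
    exact hsep
  · -- sup-norm bound
    intro x
    have h1 : |L x| ≤ ∑ S ∈ Sfil, |d S| := by
      rw [hL]
      show |∑ S ∈ Sfil, d S * chi S x| ≤ _
      refine le_trans (Finset.abs_sum_le_sum_abs _ _) ?_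
      refine Finset.sum_le_sum fun S _ => ?_
      rw [abs_mul, Aux.abs_chi, mul_one]
    have h2 : ∑ S ∈ Sfil, |d S| ≤ (Sfil.card : ℝ) := by
      have e : ∀ S ∈ Sfil, |d S| ≤ 1 := by
        intro S hSf
        have hcard : S.card ≤ D := (hmemSfil S).mp hSf
        have := habs S hcard
        rw [hcoeffL S, if_pos hSf] at this
        exact this
      calc ∑ S ∈ Sfil, |d S| ≤ ∑ S ∈ Sfil, (1:ℝ) := Finset.sum_le_sum e
        _ = (Sfil.card : ℝ) := by rw [Finset.sum_const, nsmul_eq_mul, mul_one]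
    have h3 : (Sfil.card : ℝ) ≤ (n:ℝ)^D := by
      rw [hSfil]
      rw [show (Finset.univ.filter (fun S : Finset (Fin n) => S.card ≤ D)).card
        = ∑ k ∈ Finset.range (D+1), n.choose k from Aux.card_small_sets n D]
      have h4 := Aux.sum_choose_le D n hD2 hDn
      calc ((∑ k ∈ Finset.range (D+1), n.choose k : ℕ) : ℝ)
          ≤ ((n^D : ℕ) : ℝ) := Nat.cast_le.mpr h4
        _ = (n:ℝ)^D := by push_cast; ring
    linarith
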